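/- Let λ ∈ [0,1] be irrational and let x, y be distinct elements of D. Then there exists a Jensen convex function f : D → ℝ such that f(λ·x + (1−λ)·y) > λ·f(x) + (1−λ)·f(y). -/

import Mathlib

noncomputable section

/-- The distance of a real number to the set of integers. -/
noncomputable def dZ (x : ℝ) : ℝ := ⨅ k : ℤ, |x - (k : ℝ)|

variable {X : Type*} [AddCommGroup X] [Module ℝ X]

/-- The difference set `D_Δ = {x - y : x, y ∈ D}`. -/
def diffSet (D : Set X) : Set X := {u | ∃ x ∈ D, ∃ y ∈ D, u = x - y}

/-- The half difference set `(1/2)·D_Δ`. -/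
def halfDiff (D : Set X) : Set X := {u | ∃ x ∈ D, ∃ y ∈ D, u = (2⁻¹ : ℝ) • (x - y)}

/-- `f` is `φ`-Jensen convex on `D`. -/
def JCW (D : Set X) (φ : X → ℝ) (f : X → ℝ) : Prop :=
  ∀ x ∈ D, ∀ y ∈ D,
    f ((2⁻¹ : ℝ) • (x + y)) ≤ 2⁻¹ * f x + 2⁻¹ * f y + φ ((2⁻¹ : ℝ) • (x - y))

/-- `φ` is an admissible error function on `(1/2)·D_Δ`:
it is even there, vanishes at `0`, and admits a `φ`-Jensen convex function. -/
def Admissible (D : Set X) (φ : X → ℝ) : Prop :=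
  (∀ u ∈ halfDiff D, φ (-u) = φ u) ∧ φ 0 = 0 ∧ ∃ f : X → ℝ, JCW D φ f

/-- `φ*(u) = inf_{m ∈ ℕ, m ≥ 1} m² · φ(u/m)`, valued in `[-∞, ∞)` viewed inside `EReal`. -/
noncomputable def phiStar (φ : X → ℝ) (u : X) : EReal :=
  ⨅ m : ℕ+, ((((m : ℕ) : ℝ) ^ 2 * φ ((1 / ((m : ℕ) : ℝ)) • u) : ℝ) : EReal)

/-- The real-valued version of `φ*` (equal to `φ*` wherever `φ*` is finite). -/
noncomputable def phiStarR (φ : X → ℝ) (u : X) : ℝ := (phiStar φ u).toReal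

/-- The extended error function
`E[φ](λ,u) = sup { f(λx+(1-λ)y) - λf(x) - (1-λ)f(y) : f φ-Jensen convex, x,y ∈ D, x-y = u }`. -/
noncomputable def Eerr (D : Set X) (φ : X → ℝ) (l : ℝ) (u : X) : EReal :=
  sSup {c : EReal | ∃ f : X → ℝ, JCW D φ f ∧ ∃ x ∈ D, ∃ y ∈ D, x - y = u ∧
    c = ((f (l • x + (1 - l) • y) - l * f x - (1 - l) * f y : ℝ) : EReal)}

section aux
open Set

/-- A ℚ-linear map ℝ → ℝ with a 1 = 0 and a l = 1, for irrational l. -/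
lemma exists_qlinear (l : ℝ) (hirr : Irrational l) :
    ∃ a : ℝ →ₗ[ℚ] ℝ, a 1 = 0 ∧ a l = 1 := by
  classical
  have hli : LinearIndepOn ℚ id ({(1 : ℝ), l} : Set ℝ) := by
    apply linearIndepOn_id_pair one_ne_zero
    intro q hq
    exact hirr ⟨q, by simpa [Rat.smul_def] using hq⟩
  set B := Module.Basis.extend hli with hB
  set F : (hli.extend (subset_univ _)) → ℝ := fun v => if (v : ℝ) = l then 1 else 0 with hF
  refine ⟨B.constr ℚ F, ?_, ?_⟩
  · have h1 : (1 : ℝ) ∈ hli.extend (subset_univ _) :=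
      hli.subset_extend _ (by simp)
    have heq : B ⟨1, h1⟩ = 1 := Module.Basis.extend_apply_self hli ⟨1, h1⟩
    have hcb : (B.constr ℚ F) (B ⟨1, h1⟩) = F ⟨1, h1⟩ := Module.Basis.constr_basis B ℚ F _
    rw [heq] at hcb
    rw [hcb, hF]
    have h1l : (1 : ℝ) ≠ l := fun h => hirr ⟨1, by simp [← h]⟩
    simp [h1l]
  · have h2 : l ∈ hli.extend (subset_univ _) :=
      hli.subset_extend _ (by simp)
    have heq : B ⟨l, h2⟩ = l := Module.Basis.extend_apply_self hli ⟨l, h2⟩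
    have hcb : (B.constr ℚ F) (B ⟨l, h2⟩) = F ⟨l, h2⟩ := Module.Basis.constr_basis B ℚ F _
    rw [heq] at hcb
    rw [hcb, hF]
    simp

/-- An ℝ-linear functional with value 1 on a nonzero vector. -/
lemma exists_rfunctional {X : Type*} [AddCommGroup X] [Module ℝ X] {v : X} (hv : v ≠ 0) :
    ∃ g : X →ₗ[ℝ] ℝ, g v = 1 := by
  classical
  have hli : LinearIndepOn ℝ id ({v} : Set X) :=
    (linearIndepOn_singleton_iff ℝ).2 hv
  set B := Module.Basis.extend hli with hB
  set F : (hli.extend (subset_univ _)) → ℝ := fun w => if (w : X) = v then 1 else 0 with hF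
  refine ⟨B.constr ℝ F, ?_⟩
  have h1 : v ∈ hli.extend (subset_univ _) := hli.subset_extend _ (by simp)
  have heq : B ⟨v, h1⟩ = v := Module.Basis.extend_apply_self hli ⟨v, h1⟩
  have hcb : (B.constr ℝ F) (B ⟨v, h1⟩) = F ⟨v, h1⟩ := Module.Basis.constr_basis B ℝ F _
  rw [heq] at hcb
  rw [hcb, hF]
  simp

end aux

theorem stmt0 {X : Type*} [AddCommGroup X] [Module ℝ X] (D : Set X)
    (hD : Convex ℝ D) (hne : D.Nonempty) (l : ℝ) (hl : l ∈ Set.Icc (0 : ℝ) 1)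
    (hirr : Irrational l) {x y : X} (hx : x ∈ D) (hy : y ∈ D) (hxy : x ≠ y) :
    ∃ f : X → ℝ,
      (∀ a ∈ D, ∀ b ∈ D, f ((2⁻¹ : ℝ) • (a + b)) ≤ 2⁻¹ * f a + 2⁻¹ * f b) ∧
      l * f x + (1 - l) * f y < f (l • x + (1 - l) • y) := by
  obtain ⟨a, ha1, hal⟩ := exists_qlinear l hirr
  obtain ⟨g, hg⟩ := exists_rfunctional (sub_ne_zero.2 hxy)
  have hhalf : ∀ r : ℝ, a (2⁻¹ * r) = 2⁻¹ * a r := by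
    intro r
    have : (2⁻¹ : ℝ) * r = ((2⁻¹ : ℚ) : ℝ) * r := by norm_num
    rw [this, ← Rat.smul_def, map_smul, Rat.smul_def]
    norm_num
  refine ⟨fun z => a (g z), ?_, ?_⟩
  · intro p hp q hq
    show a (g ((2⁻¹ : ℝ) • (p + q))) ≤ 2⁻¹ * a (g p) + 2⁻¹ * a (g q)
    have h1 : g ((2⁻¹ : ℝ) • (p + q)) = 2⁻¹ * (g p + g q) := by
      rw [map_smul]; simp [smul_eq_mul]
    rw [h1, hhalf, map_add]
    ring_nf
    exact le_refl _
  · show l * a (g x) + (1 - l) * a (g y) < a (g (l • x + (1 - l) • y))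
    have hgx : g x = g y + 1 := by
      have : g x - g y = 1 := by rw [← map_sub, hg]
      linarith
    have hgmix : g (l • x + (1 - l) • y) = g y + l := by
      rw [map_add, map_smul, map_smul, smul_eq_mul, smul_eq_mul, hgx]; ring
    have key1 : a (g (l • x + (1 - l) • y)) = a (g y) + 1 := by
      rw [hgmix]
      have : g y + l = g y + l := rfl
      rw [map_add, hal]
    have key2 : a (g x) = a (g y) := by
      rw [hgx, map_add, ha1, add_zero]
    rw [key1, key2]
    have : l * a (g y) + (1 - l) * a (g y) = a (g y) := by ring
    rw [this]
    linarith
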